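/- If a connected graph G admits a weak IASI and G is not bipartite, then G has at least one edge uv with |f(u)|=|f(v)|=1 (a mono-indexed edge). -/

import Mathlib

open scoped Pointwise

/-- An integer additive set-indexer (IASI) of a simple graph `G`: an injective labeling of the
vertices by finite nonempty subsets of `ℕ` such that the induced sumset map on edges is
injective. -/
def IsIASI {V : Type*} (G : SimpleGraph V) (f : V → Finset ℕ) : Prop :=
  Function.Injective f ∧ (∀ v, (f v).Nonempty) ∧
    ∀ u v x y, G.Adj u v → G.Adj x y → f u + f v = f x + f y → s(u, v) = s(x, y)

/-- A weak IASI: an IASI in which every edge `uv` satisfies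
`|f u + f v| = max |f u| |f v|`. -/
def IsWeakIASI {V : Type*} (G : SimpleGraph V) (f : V → Finset ℕ) : Prop :=
  IsIASI G f ∧ ∀ u v, G.Adj u v → (f u + f v).card = max (f u).card (f v).card

/-- If a connected graph `G` admits a weak IASI and `G` is not bipartite, then `G` has at
least one mono-indexed edge, i.e., an edge both of whose endpoints receive singleton labels. -/
theorem weakIASI_not_bipartite_mono_edge {V : Type*} (G : SimpleGraph V)
    (hconn : G.Connected) (hbip : ¬ G.Colorable 2)
    (f : V → Finset ℕ) (hf : IsWeakIASI G f) :
    ∃ u v, G.Adj u v ∧ (f u).card = 1 ∧ (f v).card = 1 := by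
  obtain ⟨⟨_, hne, _⟩, hweak⟩ := hf
  -- every edge has a singleton endpoint
  have key : ∀ u v, G.Adj u v → (f u).card = 1 ∨ (f v).card = 1 := by
    intro u v huv
    have hcd : (f u).card + (f v).card - 1 ≤ (f u + f v).card :=
      cauchy_davenport_add_of_linearOrder_isCancelAdd (hne u) (hne v)
    rw [hweak u v huv] at hcd
    have hu1 : 1 ≤ (f u).card := (hne u).card_pos
    have hv1 : 1 ≤ (f v).card := (hne v).card_pos
    omega
  by_contra h
  push_neg at h
  apply hbip
  refine ⟨fun v => if (f v).card = 1 then 0 else 1, ?_⟩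
  intro u v huv
  rcases key u v huv with h1 | h1
  · have h2 : (f v).card ≠ 1 := h u v huv h1
    simp [h1, h2]
  · have h2 : (f u).card ≠ 1 := h v u huv.symm h1
    simp [h1, h2]
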